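/- Define V : List (ℝ × ℝ) → ℕ → ℝ by V([], n) = 0, V(l, 0) = 0, and V((r,p)::l, n+1) = p·(r + V(l, n)) + (1−p)·V((r,p)::l, n). Let l be a list of pairs (r,p) with all r ≥ 0 and all p ∈ [0,1], and let l' be any permutation of l that is sorted in non-increasing order of the product r·p. Then V(l', n) ≥ V(l, n) for every n ∈ ℕ. -/

import Mathlib

/-- `expectedDebt l n` is the expected total collected debt when the AP has `n` time
slots and serves clients in the priority order `l`, each client being a pair `(r, p)` of
its delivery debt and channel reliability: each slot the AP transmits to the first
unserved client, succeeding with probability `p`, collecting `r` upon success. -/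
noncomputable def expectedDebt : List (ℝ × ℝ) → ℕ → ℝ
  | [], _ => 0
  | _ :: _, 0 => 0
  | (r, p) :: l, n + 1 =>
      p * (r + expectedDebt l n) + (1 - p) * expectedDebt ((r, p) :: l) n
  termination_by l n => (l.length, n)

lemma ED_zero (l : List (ℝ × ℝ)) : expectedDebt l 0 = 0 := by
  cases l with
  | nil => rw [expectedDebt]
  | cons a t => obtain ⟨r, p⟩ := a; rw [expectedDebt]
lemma ED_succ (r p : ℝ) (l : List (ℝ × ℝ)) (n : ℕ) :
    expectedDebt ((r,p)::l) (n+1)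
      = p*(r+expectedDebt l n)+(1-p)*expectedDebt ((r,p)::l) n := by
  rw [expectedDebt]

lemma ED_closed (r p : ℝ) (l : List (ℝ × ℝ)) (n : ℕ) :
    expectedDebt ((r,p)::l) n
      = r*(1-(1-p)^n) + ∑ k ∈ Finset.range n, p*(1-p)^k * expectedDebt l (n-1-k) := by
  induction n with
  | zero => simp [ED_zero]
  | succ n ih =>
    rw [ED_succ, ih, Finset.sum_range_succ']
    have h2 : ∑ x ∈ Finset.range n, p*(1-p)^(x+1)*expectedDebt l (n+1-1-(x+1))
        = (1-p) * ∑ x ∈ Finset.range n, p*(1-p)^x*expectedDebt l (n-1-x) := by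
      rw [Finset.mul_sum]
      exact Finset.sum_congr rfl fun x _ => by
        rw [show n+1-1-(x+1) = n-1-x by omega]; ring
    rw [h2]
    simp only [Nat.add_sub_cancel, Nat.sub_zero, pow_zero]
    generalize (∑ x ∈ Finset.range n, p*(1-p)^x*expectedDebt l (n-1-x)) = S
    ring

lemma ED_expand (r1 p1 r2 p2 : ℝ) (l : List (ℝ × ℝ)) (n : ℕ) :
    expectedDebt ((r1,p1)::(r2,p2)::l) n
      = r1*(1-(1-p1)^n)
        + r2 * ∑ k ∈ Finset.range n, p1*(1-p1)^k*(1-(1-p2)^(n-1-k))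
        + p1*p2 * ∑ k ∈ Finset.range n, ∑ j ∈ Finset.range n,
            (1-p1)^k*(1-p2)^j * expectedDebt l (n-(k+j+2)) := by
  rw [ED_closed]
  have inner : ∀ k ∈ Finset.range n,
      p1*(1-p1)^k * expectedDebt ((r2,p2)::l) (n-1-k)
        = r2*(p1*(1-p1)^k*(1-(1-p2)^(n-1-k)))
          + p1*p2 * ∑ j ∈ Finset.range n,
              (1-p1)^k*(1-p2)^j * expectedDebt l (n-(k+j+2)) := by
    intro k hk
    rw [ED_closed]
    have hext : ∑ j ∈ Finset.range (n-1-k), p2*(1-p2)^j * expectedDebt l (n-1-k-1-j)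
        = ∑ j ∈ Finset.range n, p2*(1-p2)^j * expectedDebt l (n-1-k-1-j) := by
      refine Finset.sum_subset (Finset.range_subset_range.2 (by omega)) ?_
      intro j hjn hjk
      simp only [Finset.mem_range] at hjn hjk
      rw [show n-1-k-1-j = 0 by omega, ED_zero]; ring
    rw [hext, mul_add, Finset.mul_sum, Finset.mul_sum]
    refine congrArg₂ (·+·) (by ring) (Finset.sum_congr rfl fun j _ => by
      rw [show n-1-k-1-j = n-(k+j+2) by omega]; ring)
  rw [Finset.sum_congr rfl inner, Finset.sum_add_distrib, ← Finset.mul_sum, ← Finset.mul_sum]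
  ring

lemma ED_swap (r1 p1 r2 p2 : ℝ) (l : List (ℝ × ℝ)) (n : ℕ)
    (hp1 : p1 ≤ 1) (hp2 : p2 ≤ 1) (hD : r2*p2 ≤ r1*p1) :
    expectedDebt ((r2,p2)::(r1,p1)::l) n ≤ expectedDebt ((r1,p1)::(r2,p2)::l) n := by
  set q1 := 1 - p1 with hq1
  set q2 := 1 - p2 with hq2
  set W := expectedDebt l with hW
  set S := ∑ k ∈ Finset.range n, q1^k * q2^(n-1-k) with hS
  have hq1n : 0 ≤ q1 := by simp [hq1]; linarith
  have hq2n : 0 ≤ q2 := by simp [hq2]; linarith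
  have hSnn : 0 ≤ S := Finset.sum_nonneg fun k _ =>
    mul_nonneg (pow_nonneg hq1n k) (pow_nonneg hq2n (n-1-k))
  -- double sum symmetry
  have hT : ∑ k ∈ Finset.range n, ∑ j ∈ Finset.range n, q2^k*q1^j * W (n-(k+j+2))
      = ∑ k ∈ Finset.range n, ∑ j ∈ Finset.range n, q1^k*q2^j * W (n-(k+j+2)) := by
    rw [Finset.sum_comm]
    exact Finset.sum_congr rfl fun j _ => Finset.sum_congr rfl fun k _ => by
      rw [show n-(k+j+2) = n-(j+k+2) by omega]; ring
  -- geometric sums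
  have hg1 : ∑ k ∈ Finset.range n, p1*q1^k = 1 - q1^n := by
    have h := geom_sum_mul q1 n
    rw [← Finset.mul_sum]
    linear_combination -h + (∑ k ∈ Finset.range n, q1^k) * hq1
  have hg2 : ∑ k ∈ Finset.range n, p2*q2^k = 1 - q2^n := by
    have h := geom_sum_mul q2 n
    rw [← Finset.mul_sum]
    linear_combination -h + (∑ k ∈ Finset.range n, q2^k) * hq2
  -- reflected sum
  have hrefl : ∑ k ∈ Finset.range n, q2^k * q1^(n-1-k) = S := by
    rw [hS]
    conv_rhs => rw [← Finset.sum_range_reflect]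
    refine Finset.sum_congr rfl fun k hk => ?_
    simp only [Finset.mem_range] at hk
    rw [show n-1-(n-1-k) = k by omega]; ring
  -- power difference
  have hpow : S * (q1 - q2) = q1^n - q2^n := geom_sum₂_mul q1 q2 n
  -- single sums
  have hA1 : ∑ k ∈ Finset.range n, p1*q1^k*(1-q2^(n-1-k)) = (1 - q1^n) - p1*S := by
    have : ∑ k ∈ Finset.range n, p1*q1^k*(1-q2^(n-1-k))
        = ∑ k ∈ Finset.range n, (p1*q1^k - p1*(q1^k*q2^(n-1-k))) :=
      Finset.sum_congr rfl fun k _ => by ring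
    rw [this, Finset.sum_sub_distrib, hg1, ← Finset.mul_sum, ← hS]
  have hA2 : ∑ k ∈ Finset.range n, p2*q2^k*(1-q1^(n-1-k)) = (1 - q2^n) - p2*S := by
    have : ∑ k ∈ Finset.range n, p2*q2^k*(1-q1^(n-1-k))
        = ∑ k ∈ Finset.range n, (p2*q2^k - p2*(q2^k*q1^(n-1-k))) :=
      Finset.sum_congr rfl fun k _ => by ring
    rw [this, Finset.sum_sub_distrib, hg2, ← Finset.mul_sum, hrefl]
  have hf := ED_expand r1 p1 r2 p2 l n
  have hg := ED_expand r2 p2 r1 p1 l n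
  rw [← hq1, ← hq2, ← hW, hA1] at hf
  rw [← hq2, ← hq1, ← hW, hA2, hT] at hg
  have key : expectedDebt ((r1,p1)::(r2,p2)::l) n - expectedDebt ((r2,p2)::(r1,p1)::l) n
      = (r1*p1 - r2*p2) * S := by
    rw [hf, hg]
    linear_combination (r1 + r2) * hpow
  nlinarith [mul_nonneg (sub_nonneg.2 hD) hSnn]

lemma ED_cons_mono (r p : ℝ) (hp0 : 0 ≤ p) (hp1 : p ≤ 1) {l1 l2 : List (ℝ × ℝ)}
    (h : ∀ m, expectedDebt l2 m ≤ expectedDebt l1 m) (n : ℕ) :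
    expectedDebt ((r,p)::l2) n ≤ expectedDebt ((r,p)::l1) n := by
  induction n with
  | zero => simp [ED_zero]
  | succ n ih =>
    rw [ED_succ, ED_succ]
    exact add_le_add (mul_le_mul_of_nonneg_left (by linarith [h n]) hp0)
      (mul_le_mul_of_nonneg_left ih (by linarith))

lemma ED_bubble (a : ℝ × ℝ) (ha1 : a.2 ≤ 1) (l2 : List (ℝ × ℝ)) :
    ∀ l1 : List (ℝ × ℝ), (∀ c ∈ l1, ((0:ℝ) ≤ c.2 ∧ c.2 ≤ 1) ∧ c.1*c.2 ≤ a.1*a.2) →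
    ∀ n, expectedDebt (l1 ++ a :: l2) n ≤ expectedDebt (a :: (l1 ++ l2)) n := by
  intro l1
  induction l1 with
  | nil => intro _ n; exact le_refl _
  | cons c u ih =>
    intro hc n
    obtain ⟨⟨hc0, hc1⟩, hcprod⟩ := hc c (by simp)
    obtain ⟨ra, pa⟩ := a
    obtain ⟨rc, pc⟩ := c
    calc expectedDebt ((rc,pc) :: (u ++ (ra,pa) :: l2)) n
        ≤ expectedDebt ((rc,pc) :: (ra,pa) :: (u ++ l2)) n :=
          ED_cons_mono rc pc hc0 hc1
            (ih (fun d hd => hc d (by simp [hd]))) n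
      _ ≤ expectedDebt ((ra,pa) :: (rc,pc) :: (u ++ l2)) n :=
          ED_swap ra pa rc pc (u ++ l2) n ha1 hc1 hcprod

theorem expectedDebt_sorted_optimal' (l l' : List (ℝ × ℝ))
    (hl : ∀ x ∈ l, 0 ≤ x.1 ∧ x.2 ∈ Set.Icc (0 : ℝ) 1)
    (hperm : l'.Perm l)
    (hsorted : l'.Pairwise fun a b => b.1 * b.2 ≤ a.1 * a.2)
    (n : ℕ) :
    expectedDebt l' n ≥ expectedDebt l n := by
  induction l' generalizing l n with
  | nil => rw [hperm.symm.eq_nil]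
  | cons a t' ih =>
    obtain ⟨hmax, hsort'⟩ := List.pairwise_cons.mp hsorted
    have ha : a ∈ l := hperm.mem_iff.mp (by simp)
    obtain ⟨l1, l2, rfl⟩ := List.append_of_mem ha
    have hmid : (l1 ++ a :: l2).Perm (a :: (l1 ++ l2)) := List.perm_middle
    have ht' : t'.Perm (l1 ++ l2) := (hperm.trans hmid).cons_inv
    have hmem : ∀ x ∈ l1 ++ l2, x ∈ l1 ++ a :: l2 := by
      intro x hx; simp only [List.mem_append] at hx ⊢; tauto
    have hihm : ∀ m, expectedDebt (l1 ++ l2) m ≤ expectedDebt t' m := fun m =>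
      ih (l1 ++ l2) (fun x hx => hl x (hmem x hx)) ht' hsort' m
    have hal := hl a ha
    have hbub := ED_bubble a hal.2.2 l2 l1 ?_ n
    · calc expectedDebt (l1 ++ a :: l2) n
          ≤ expectedDebt (a :: (l1 ++ l2)) n := hbub
        _ ≤ expectedDebt (a :: t') n := by
            obtain ⟨ra, pa⟩ := a
            exact ED_cons_mono ra pa hal.2.1 hal.2.2 hihm n
    · intro c hc
      have hcl : c ∈ l1 ++ a :: l2 := by
        simp only [List.mem_append] at hc ⊢; tauto
      have hcb := hl c hcl
      refine ⟨⟨hcb.2.1, hcb.2.2⟩, ?_⟩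
      have : c ∈ a :: t' := hperm.mem_iff.mpr hcl
      rcases List.mem_cons.mp this with h | h
      · rw [h]
      · exact hmax c h

/-- Within-period optimality of the joint debt-channel policy: ordering clients in
non-increasing order of the product of delivery debt and channel reliability maximizes
the expected payoff over all priority orderings. -/
theorem expectedDebt_sorted_optimal (l l' : List (ℝ × ℝ))
    (hl : ∀ x ∈ l, 0 ≤ x.1 ∧ x.2 ∈ Set.Icc (0 : ℝ) 1)
    (hperm : l'.Perm l)
    (hsorted : l'.Pairwise fun a b => b.1 * b.2 ≤ a.1 * a.2)
    (n : ℕ) :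
    expectedDebt l' n ≥ expectedDebt l n := by
  exact expectedDebt_sorted_optimal' l l' hl hperm hsorted n
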